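/- Suppose $\sigma$ is a $K$-algebra endomorphism of $L$ such that $\sigma(X_n) = \dfrac{P_n}{X_{n-1} P_{n-2}}$ for all $n \in \mathbb{Z}/m\mathbb{Z}$. Then for every $n \in \mathbb{Z}/m\mathbb{Z}$ and every integer $k$ with $2 \le k \le m$ one has $\sigma(D_n^{(k)}) = \dfrac{P_{n-1}}{X_{n-1} X_{n-2} \cdots X_{n-k+1}\, P_{n-k}}\, D_n^{(k)}$. -/

import Mathlib

/- Setting: `Lm K m` is the field of fractions of the (Laurent) polynomial ring over a field
`K` in commuting variables `yv n` indexed by `n : ZMod m`, with fixed scalars `F n : K`. -/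

noncomputable section

variable (K : Type) [Field K] (m : ℕ) [NeZero m]

/-- The ambient field `L`. -/
abbrev Lm := FractionRing (MvPolynomial (ZMod m) K)

/-- The variable `y_n`. -/
def yv (n : ZMod m) : Lm K m :=
  algebraMap (MvPolynomial (ZMod m) K) (Lm K m) (MvPolynomial.X n)

variable (F : ZMod m → K)

/-- The scalar `F_n` viewed inside `L`. -/
def Fc (n : ZMod m) : Lm K m := algebraMap K (Lm K m) (F n)

/-- `X_n = F_n / (y_n y_{n+1})`. -/
def Xv (n : ZMod m) : Lm K m := Fc K m F n / (yv K m n * yv K m (n + 1))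

/-- `P_n = 1 + ∑_{k=0}^{m-2} X_n X_{n-1} ⋯ X_{n-k}`. -/
def Pv (n : ZMod m) : Lm K m :=
  1 + ∑ k ∈ Finset.range (m - 1), ∏ j ∈ Finset.range (k + 1), Xv K m F (n - (j : ZMod m))

/-- `z_n = y_n (1 + X_n)`. -/
def zv (n : ZMod m) : Lm K m := yv K m n * (1 + Xv K m F n)

/-- `𝐲 = ∏_n y_n`. -/
def boldy : Lm K m := ∏ n : ZMod m, yv K m n

/-- `𝐅 = ∏_n F_n` (viewed in `L`). -/
def boldF : Lm K m := ∏ n : ZMod m, Fc K m F n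

/-- `δ = 𝐲 - 𝐅/𝐲`. -/
def deltav : Lm K m := boldy K m - boldF K m F / boldy K m
/-- `D_n^{(k)} = 1 + ∑_{p=0}^{k-2} X_n X_{n-1} ⋯ X_{n-p}` (for `k ≥ 2`). -/
def Dv (n : ZMod m) (k : ℕ) : Lm K m :=
  1 + ∑ p ∈ Finset.range (k - 1), ∏ j ∈ Finset.range (p + 1), Xv K m F (n - (j : ZMod m))

/-- auxiliary: `S_t(n) = X_n X_{n-1} ⋯ X_{n-t+1}`. -/
def Sv (n : ZMod m) (t : ℕ) : Lm K m := ∏ j ∈ Finset.range t, Xv K m F (n - (j : ZMod m))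

def Piv : Lm K m := ∏ a : ZMod m, Xv K m F a

lemma Sv_one (n : ZMod m) : Sv K m F n 1 = Xv K m F n := by simp [Sv]

lemma Sv_succ' (n : ZMod m) (t : ℕ) :
    Sv K m F n (t + 1) = Sv K m F n t * Xv K m F (n - (t : ZMod m)) :=
  Finset.prod_range_succ _ _

lemma Sv_succ (n : ZMod m) (t : ℕ) :
    Sv K m F n (t + 1) = Xv K m F n * Sv K m F (n - 1) t := by
  rw [Sv, Finset.prod_range_succ', Sv, mul_comm]
  congr 1
  · simp
  · refine Finset.prod_congr rfl fun j _ => ?_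
    congr 1
    push_cast
    ring

lemma Sv_m (n : ZMod m) : Sv K m F n m = Piv K m F := by
  rw [Sv, Piv]
  refine Finset.prod_bij (fun j _ => n - (j : ZMod m)) (fun _ _ => Finset.mem_univ _)
    (fun j₁ h₁ j₂ h₂ h => ?_) (fun b _ => ?_) (fun _ _ => rfl)
  · have : (j₁ : ZMod m) = (j₂ : ZMod m) := by
      have := sub_right_injective (G := ZMod m) h
      exact this
    have h₁' := ZMod.val_cast_of_lt (Finset.mem_range.mp h₁)
    have h₂' := ZMod.val_cast_of_lt (Finset.mem_range.mp h₂)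
    rw [← h₁', ← h₂', this]
  · refine ⟨(n - b).val, Finset.mem_range.mpr (ZMod.val_lt _), ?_⟩
    show n - ((n - b).val : ZMod m) = b
    rw [ZMod.natCast_val, ZMod.cast_id]
    ring

lemma Dv_one (n : ZMod m) : Dv K m F n 1 = 1 := by simp [Dv]

lemma Dv_two (n : ZMod m) : Dv K m F n 2 = 1 + Xv K m F n := by
  simp [Dv]

lemma Dv_succ (n : ZMod m) (k : ℕ) (hk : 1 ≤ k) :
    Dv K m F n (k + 1) = Dv K m F n k + Sv K m F n k := by
  rw [Dv, Dv, Sv, show k + 1 - 1 = (k - 1) + 1 by omega, Finset.sum_range_succ,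
    show k - 1 + 1 = k by omega]
  ring

lemma Pv_eq_Dv (n : ZMod m) : Pv K m F n = Dv K m F n m := rfl

lemma Pv_rec (n : ZMod m) :
    Pv K m F n = Xv K m F n * Pv K m F (n - 1) + (1 - Piv K m F) := by
  have hP : ∀ a : ZMod m,
      Pv K m F a = 1 + ∑ k ∈ Finset.range (m - 1), Sv K m F a (k + 1) := fun a => rfl
  have hm1 : m - 1 + 1 = m := Nat.succ_pred_eq_of_pos (NeZero.pos m)
  have h1 := Finset.sum_range_succ (fun k => Sv K m F n (k + 1)) (m - 1)
  rw [hm1] at h1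
  have h2 := Finset.sum_range_succ' (fun k => Sv K m F n (k + 1)) (m - 1)
  rw [hm1] at h2
  simp only [zero_add] at h2
  have key : ∑ k ∈ Finset.range (m - 1), Sv K m F n (k + 1) + Sv K m F n m
      = Sv K m F n 1 + ∑ k ∈ Finset.range (m - 1), Sv K m F n (k + 1 + 1) := by
    rw [← h1, h2]; ring
  have exp : Xv K m F n * Pv K m F (n - 1)
      = Sv K m F n 1 + ∑ k ∈ Finset.range (m - 1), Sv K m F n (k + 1 + 1) := by
    rw [hP (n - 1), mul_add, mul_one, Finset.mul_sum, Sv_one]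
    congr 1
    refine Finset.sum_congr rfl fun k _ => (Sv_succ K m F n (k + 1)).symm
  rw [hP n, exp, ← Sv_m K m F n]
  linear_combination key

lemma star (n : ZMod m) : ∀ k : ℕ, 1 ≤ k →
    Pv K m F n = Sv K m F n k * Pv K m F (n - (k : ZMod m))
      + (1 - Piv K m F) * Dv K m F n k := by
  intro k
  induction k with
  | zero => omega
  | succ k ih =>
    intro _
    rcases Nat.eq_zero_or_pos k with h0 | h1
    · subst h0
      rw [Sv_one, Dv_one, mul_one]
      push_cast
      exact Pv_rec K m F n
    · have hrec := Pv_rec K m F (n - (k : ZMod m))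
      rw [Dv_succ K m F n k h1, Sv_succ']
      have hc : ((k + 1 : ℕ) : ZMod m) = (k : ZMod m) + 1 := by push_cast; ring
      rw [hc, show n - ((k : ZMod m) + 1) = n - (k : ZMod m) - 1 by ring]
      linear_combination (ih h1) + (Sv K m F n k) * hrec

lemma yv_ne (n : ZMod m) : yv K m n ≠ 0 :=
  (map_ne_zero_iff _ (IsFractionRing.injective (MvPolynomial (ZMod m) K) (Lm K m))).mpr
    (MvPolynomial.X_ne_zero n)

variable {F} in
lemma Fc_ne (hF : ∀ n, F n ≠ 0) (n : ZMod m) : Fc K m F n ≠ 0 :=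
  (map_ne_zero_iff _ (algebraMap K (Lm K m)).injective).mpr (hF n)

variable {F} in
lemma Xv_ne (hF : ∀ n, F n ≠ 0) (n : ZMod m) : Xv K m F n ≠ 0 :=
  div_ne_zero (Fc_ne K m hF n) (mul_ne_zero (yv_ne K m n) (yv_ne K m _))

variable {F} in
lemma Sv_ne (hF : ∀ n, F n ≠ 0) (n : ZMod m) (t : ℕ) : Sv K m F n t ≠ 0 :=
  Finset.prod_ne_zero_iff.mpr fun _ _ => Xv_ne K m hF _

lemma cast_inj_of_lt {j₁ j₂ : ℕ} (h₁ : j₁ < m) (h₂ : j₂ < m)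
    (h : (j₁ : ZMod m) = (j₂ : ZMod m)) : j₁ = j₂ := by
  rw [← ZMod.val_cast_of_lt h₁, ← ZMod.val_cast_of_lt h₂, h]

open MvPolynomial in
variable {F} in
lemma Pv_ne (hF : ∀ n, F n ≠ 0) (n : ZMod m) : Pv K m F n ≠ 0 := by
  classical
  set R' := MvPolynomial (ZMod m) K with hR
  set ι := algebraMap R' (Lm K m) with hι
  have hinj : Function.Injective ι := IsFractionRing.injective R' (Lm K m)
  have hXne : ∀ a : ZMod m, (X a : R') ≠ 0 := fun a => X_ne_zero a
  have hιX : ∀ a : ZMod m, ι (X a) ≠ 0 := fun a =>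
    (map_ne_zero_iff _ hinj).mpr (hXne a)
  set Gp : R' := (∏ a : ZMod m, X a) ^ 2 with hG
  have hXv : ∀ a : ZMod m, Xv K m F a = ι (C (F a)) / (ι (X a) * ι (X (a + 1))) := by
    intro a
    rw [Xv, Fc, IsScalarTower.algebraMap_apply K R' (Lm K m), MvPolynomial.algebraMap_eq]
    rfl
  -- data for each term
  set s1 : ℕ → Finset (ZMod m) :=
    fun k => (Finset.range (k + 1)).image (fun j : ℕ => n - (j : ZMod m)) with hs1
  set s2 : ℕ → Finset (ZMod m) :=
    fun k => (Finset.range (k + 1)).image (fun j : ℕ => n - (j : ZMod m) + 1) with hs2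
  set q1 : ℕ → R' := fun k => ∏ a ∈ Finset.univ \ s1 k, X a with hq1
  set q2 : ℕ → R' := fun k => ∏ a ∈ Finset.univ \ s2 k, X a with hq2
  set ck : ℕ → K := fun k => ∏ j ∈ Finset.range (k + 1), F (n - (j : ZMod m)) with hck
  have hinj1 : ∀ k, k + 1 ≤ m → Set.InjOn (fun j : ℕ => n - (j : ZMod m))
      (Finset.range (k + 1)) := by
    intro k hk j₁ h₁ j₂ h₂ h
    simp only [Finset.coe_range, Set.mem_Iio] at h₁ h₂
    have : (j₁ : ZMod m) = (j₂ : ZMod m) := by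
      have := sub_right_injective (G := ZMod m) h
      exact this
    exact cast_inj_of_lt m (by omega) (by omega) this
  have hinj2 : ∀ k, k + 1 ≤ m → Set.InjOn (fun j : ℕ => n - (j : ZMod m) + 1)
      (Finset.range (k + 1)) := by
    intro k hk j₁ h₁ j₂ h₂ h
    simp only [Finset.coe_range, Set.mem_Iio] at h₁ h₂
    have h' : n - (j₁ : ZMod m) = n - (j₂ : ZMod m) := by
      have := add_left_injective (1 : ZMod m) h
      exact this
    have : (j₁ : ZMod m) = (j₂ : ZMod m) := sub_right_injective (G := ZMod m) h'
    exact cast_inj_of_lt m (by omega) (by omega) this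
  -- key: multiply each term by ι Gp
  have hmain : ∀ k, k + 1 ≤ m →
      ι Gp * (∏ j ∈ Finset.range (k + 1), Xv K m F (n - (j : ZMod m)))
        = ι (C (ck k) * (q1 k * q2 k)) := by
    intro k hk
    have hA : (∏ j ∈ Finset.range (k + 1), (X (n - (j : ZMod m)) : R')) * q1 k
        = ∏ a : ZMod m, X a := by
      rw [hq1]
      rw [show (∏ j ∈ Finset.range (k + 1), (X (n - (j : ZMod m)) : R'))
          = ∏ a ∈ s1 k, X a from (Finset.prod_image (hinj1 k hk)).symm]
      rw [mul_comm]
      exact Finset.prod_sdiff (Finset.subset_univ _)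
    have hB : (∏ j ∈ Finset.range (k + 1), (X (n - (j : ZMod m) + 1) : R')) * q2 k
        = ∏ a : ZMod m, X a := by
      rw [hq2]
      rw [show (∏ j ∈ Finset.range (k + 1), (X (n - (j : ZMod m) + 1) : R'))
          = ∏ a ∈ s2 k, X a from (Finset.prod_image (hinj2 k hk)).symm]
      rw [mul_comm]
      exact Finset.prod_sdiff (Finset.subset_univ _)
    have hterm : (∏ j ∈ Finset.range (k + 1), Xv K m F (n - (j : ZMod m)))
        = ι (C (ck k)) /
          (ι (∏ j ∈ Finset.range (k + 1), (X (n - (j : ZMod m)) : R'))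
            * ι (∏ j ∈ Finset.range (k + 1), (X (n - (j : ZMod m) + 1) : R'))) := by
      simp only [hXv]
      rw [Finset.prod_div_distrib, Finset.prod_mul_distrib]
      rw [← map_prod, ← map_prod, ← map_prod, ← map_prod, hck]
    have hAne : ι (∏ j ∈ Finset.range (k + 1), (X (n - (j : ZMod m)) : R')) ≠ 0 :=
      (map_ne_zero_iff _ hinj).mpr (Finset.prod_ne_zero_iff.mpr fun _ _ => hXne _)
    have hBne : ι (∏ j ∈ Finset.range (k + 1), (X (n - (j : ZMod m) + 1) : R')) ≠ 0 :=
      (map_ne_zero_iff _ hinj).mpr (Finset.prod_ne_zero_iff.mpr fun _ _ => hXne _)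
    have hterm' : (∏ j ∈ Finset.range (k + 1), Xv K m F (n - (j : ZMod m)))
        * (ι (∏ j ∈ Finset.range (k + 1), (X (n - (j : ZMod m)) : R'))
          * ι (∏ j ∈ Finset.range (k + 1), (X (n - (j : ZMod m) + 1) : R')))
        = ι (C (ck k)) := by
      rw [hterm, div_mul_cancel₀ _ (mul_ne_zero hAne hBne)]
    rw [hG]
    rw [show ((∏ a : ZMod m, X a : R') ^ 2)
        = ((∏ j ∈ Finset.range (k + 1), (X (n - (j : ZMod m)) : R')) * q1 k)
          * ((∏ j ∈ Finset.range (k + 1), (X (n - (j : ZMod m) + 1) : R')) * q2 k) by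
      rw [hA, hB, sq]]
    rw [map_mul, map_mul, map_mul, map_mul, map_mul]
    linear_combination (ι (q1 k) * ι (q2 k)) * hterm' 
  -- ι Gp * Pv n = ι Np
  set Np : R' := Gp + ∑ k ∈ Finset.range (m - 1), C (ck k) * (q1 k * q2 k) with hNp
  have hGPv : ι Gp * Pv K m F n = ι Np := by
    rw [Pv, mul_add, mul_one, Finset.mul_sum, hNp, map_add, map_sum]
    congr 1
    refine Finset.sum_congr rfl fun k hk => ?_
    exact hmain k (by have := Finset.mem_range.mp hk; omega)
  -- Np ≠ 0 via coefficient at d = (2,2,…,2)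
  intro hP0
  rw [hP0, mul_zero] at hGPv
  have hNp0 : Np = 0 := hinj (by rw [← hGPv, map_zero])
  set d : ZMod m →₀ ℕ := Finsupp.equivFunOnFinite.symm (fun _ => 2) with hd
  have hda : ∀ a, d a = 2 := fun a => rfl
  have hdsupp : d.support = Finset.univ := by
    ext a
    simp [Finsupp.mem_support_iff, hda]
  have hGmon : Gp = monomial d (1 : K) := by
    rw [← prod_X_pow_eq_monomial, hdsupp, hG, ← Finset.prod_pow]
    exact Finset.prod_congr rfl fun a _ => by rw [hda]
  have hdeg : (∑ i ∈ d.support, d i) = 2 * m := by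
    rw [hdsupp]
    simp only [hda, Finset.sum_const, Finset.card_univ, ZMod.card, smul_eq_mul]
    ring
  have hcoeffG : coeff d Gp = 1 := by
    rw [hGmon, coeff_monomial, if_pos rfl]
  have hcoeffS : coeff d (∑ k ∈ Finset.range (m - 1), C (ck k) * (q1 k * q2 k)) = 0 := by
    apply coeff_eq_zero_of_totalDegree_lt
    rw [hdeg]
    have hbound : ∀ k ∈ Finset.range (m - 1),
        (C (ck k) * (q1 k * q2 k)).totalDegree ≤ 2 * m - 2 := by
      intro k hk
      have hk' : k + 1 ≤ m - 1 := by have := Finset.mem_range.mp hk; omega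
      have hcard1 : (s1 k).card = k + 1 := by
        rw [hs1, Finset.card_image_of_injOn (hinj1 k (by omega)), Finset.card_range]
      have hcard2 : (s2 k).card = k + 1 := by
        rw [hs2, Finset.card_image_of_injOn (hinj2 k (by omega)), Finset.card_range]
      have hq1deg : (q1 k).totalDegree ≤ m - (k + 1) := by
        refine (totalDegree_finset_prod _ _).trans ?_
        calc (∑ a ∈ Finset.univ \ s1 k, (X a : R').totalDegree)
            = (Finset.univ \ s1 k).card := by
              simp [totalDegree_X]
          _ ≤ m - (k + 1) := by
              rw [Finset.card_sdiff_of_subset (Finset.subset_univ _), Finset.card_univ, ZMod.card,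
                hcard1]
      have hq2deg : (q2 k).totalDegree ≤ m - (k + 1) := by
        refine (totalDegree_finset_prod _ _).trans ?_
        calc (∑ a ∈ Finset.univ \ s2 k, (X a : R').totalDegree)
            = (Finset.univ \ s2 k).card := by
              simp [totalDegree_X]
          _ ≤ m - (k + 1) := by
              rw [Finset.card_sdiff_of_subset (Finset.subset_univ _), Finset.card_univ, ZMod.card,
                hcard2]
      calc (C (ck k) * (q1 k * q2 k)).totalDegree
          ≤ (C (ck k) : R').totalDegree + (q1 k * q2 k).totalDegree :=
            totalDegree_mul _ _
        _ ≤ 0 + ((q1 k).totalDegree + (q2 k).totalDegree) := by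
            exact add_le_add (by simp [totalDegree_C]) (totalDegree_mul _ _)
        _ ≤ 0 + ((m - (k + 1)) + (m - (k + 1))) := by
            exact add_le_add le_rfl (add_le_add hq1deg hq2deg)
        _ ≤ 2 * m - 2 := by omega
    refine lt_of_le_of_lt (totalDegree_finsetSum_le hbound) ?_
    have : 1 ≤ m := NeZero.pos m
    omega
  have : coeff d Np = 1 := by
    rw [hNp, coeff_add, hcoeffG, hcoeffS, add_zero]
  rw [hNp0] at this
  simp at this

lemma Icc_prod (n : ZMod m) (t : ℕ) :
    ∏ j ∈ Finset.Icc 1 t, Xv K m F (n - (j : ZMod m)) = Sv K m F (n - 1) t := by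
  induction t with
  | zero => simp [Sv]
  | succ t ih =>
    rw [Finset.prod_Icc_succ_top (by omega), ih, Sv_succ']
    congr 2
    push_cast
    ring

variable {F} in
lemma sigma_Sv (hF : ∀ n, F n ≠ 0) (σ : Lm K m →ₐ[K] Lm K m)
    (hσ : ∀ n : ZMod m, σ (Xv K m F n) = Pv K m F n / (Xv K m F (n - 1) * Pv K m F (n - 2)))
    (n : ZMod m) : ∀ k : ℕ, 1 ≤ k →
    σ (Sv K m F n k) = Pv K m F n * Pv K m F (n - 1) /
      (Sv K m F (n - 1) k * Pv K m F (n - (k : ZMod m)) * Pv K m F (n - (k : ZMod m) - 1)) := by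
  intro k
  induction k with
  | zero => omega
  | succ k ih =>
    intro _
    rcases Nat.eq_zero_or_pos k with h0 | h1
    · subst h0
      rw [Sv_one, Sv_one, hσ n]
      push_cast
      rw [show n - (1 : ZMod m) - 1 = n - 2 by ring]
      rw [div_eq_div_iff (mul_ne_zero (Xv_ne K m hF _) (Pv_ne K m hF _))
        (mul_ne_zero (mul_ne_zero (Xv_ne K m hF _) (Pv_ne K m hF _)) (Pv_ne K m hF _))]
      ring
    · have ih' := ih h1
      rw [Sv_succ', map_mul, ih', hσ (n - (k : ZMod m))]
      rw [Sv_succ']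
      push_cast
      rw [show n - ((k : ZMod m) + 1) - 1 = n - (k : ZMod m) - 2 by ring,
        show n - ((k : ZMod m) + 1) = n - (k : ZMod m) - 1 by ring,
        show n - 1 - (k : ZMod m) = n - (k : ZMod m) - 1 by ring]
      rw [div_mul_div_comm, div_eq_div_iff (by
          exact mul_ne_zero (mul_ne_zero (mul_ne_zero (Sv_ne K m hF _ _) (Pv_ne K m hF _))
            (Pv_ne K m hF _)) (mul_ne_zero (Xv_ne K m hF _) (Pv_ne K m hF _)))
        (by exact mul_ne_zero (mul_ne_zero (mul_ne_zero (Sv_ne K m hF _ _) (Xv_ne K m hF _))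
            (Pv_ne K m hF _)) (Pv_ne K m hF _))]
      ring

private lemma field_step {L : Type*} [Field L] (A P1 Pk Pk1 D S Xk Pn : L)
    (hA : A ≠ 0) (hPk : Pk ≠ 0) (hPk1 : Pk1 ≠ 0) (hXk : Xk ≠ 0)
    (key : Xk * Pk1 * D + Pn = Pk * (D + S)) :
    P1 / (A * Pk) * D + Pn * P1 / (A * Xk * Pk * Pk1)
      = P1 / (A * Xk * Pk1) * (D + S) := by
  field_simp
  linear_combination P1 * key

variable {F} in
lemma main_aux (hF : ∀ n, F n ≠ 0) (σ : Lm K m →ₐ[K] Lm K m)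
    (hσ : ∀ n : ZMod m, σ (Xv K m F n) = Pv K m F n / (Xv K m F (n - 1) * Pv K m F (n - 2)))
    (n : ZMod m) : ∀ k : ℕ, 2 ≤ k → k ≤ m →
    σ (Dv K m F n k) = Pv K m F (n - 1) /
      (Sv K m F (n - 1) (k - 1) * Pv K m F (n - (k : ZMod m))) * Dv K m F n k := by
  intro k
  induction k with
  | zero => omega
  | succ k ih =>
    intro hk2 hkm
    rcases Nat.lt_or_ge k 2 with hlt | h2
    · have hk1 : k = 1 := by omega
      subst hk1
      rw [Dv_two, map_add σ, map_one σ, hσ n]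
      rw [show (2 : ℕ) - 1 = 1 by norm_num, Sv_one]
      rw [show ((2 : ℕ) : ZMod m) = 2 by push_cast; ring]
      have h1 := star K m F n 1 le_rfl
      have h2 := star K m F (n - 1) 1 le_rfl
      rw [Sv_one, Dv_one] at h1 h2
      push_cast at h1 h2
      rw [show n - 1 - 1 = n - 2 by ring] at h2
      have key : Xv K m F (n - 1) * Pv K m F (n - 2) + Pv K m F n
          = Pv K m F (n - 1) * (1 + Xv K m F n) := by
        linear_combination h1 - h2
      have hX1 := Xv_ne K m hF (n - 1)
      have hP2 := Pv_ne K m hF (n - 2)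
      field_simp
      linear_combination key
    · have ih' := ih h2 (by omega)
      rw [Dv_succ K m F n k (by omega), map_add σ, ih', sigma_Sv K m hF σ hσ n k (by omega)]
      have hSk : Sv K m F (n - 1) k
          = Sv K m F (n - 1) (k - 1) * Xv K m F (n - (k : ZMod m)) := by
        have h := Sv_succ' K m F (n - 1) (k - 1)
        rw [show k - 1 + 1 = k by omega] at h
        rw [h]
        congr 2
        rw [Nat.cast_sub (by omega : 1 ≤ k)]
        push_cast
        ring
      rw [show k + 1 - 1 = k by omega, hSk]
      push_cast
      rw [show n - ((k : ZMod m) + 1) = n - (k : ZMod m) - 1 by ring]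
      have hrec := Pv_rec K m F (n - (k : ZMod m))
      have hstar1 := star K m F n k (by omega)
      have key : Xv K m F (n - (k : ZMod m)) * Pv K m F (n - (k : ZMod m) - 1) * Dv K m F n k
          + Pv K m F n
          = Pv K m F (n - (k : ZMod m)) * (Dv K m F n k + Sv K m F n k) := by
        linear_combination hstar1 - (Dv K m F n k) * hrec
      exact field_step _ _ _ _ _ _ _ _ (Sv_ne K m hF _ _) (Pv_ne K m hF _)
        (Pv_ne K m hF _) (Xv_ne K m hF _) key

/-- if `σ` is a `K`-algebra endomorphism of `L` with
`σ(X_n) = P_n/(X_{n-1} P_{n-2})` for all `n`, then for all `n` and `2 ≤ k ≤ m` one has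
`σ(D_n^{(k)}) = P_{n-1}/(X_{n-1} X_{n-2} ⋯ X_{n-k+1} P_{n-k}) · D_n^{(k)}`. -/
theorem stmt_11 (hm : 2 ≤ m) (hF : ∀ n, F n ≠ 0)
    (σ : Lm K m →ₐ[K] Lm K m)
    (hσ : ∀ n : ZMod m, σ (Xv K m F n) = Pv K m F n / (Xv K m F (n - 1) * Pv K m F (n - 2))) :
    ∀ n : ZMod m, ∀ k : ℕ, 2 ≤ k → k ≤ m →
      σ (Dv K m F n k) =
        Pv K m F (n - 1) /
            ((∏ j ∈ Finset.Icc 1 (k - 1), Xv K m F (n - (j : ZMod m))) * Pv K m F (n - (k : ZMod m)))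
          * Dv K m F n k := by
  intro n k hk2 hkm
  rw [Icc_prod K m F n (k - 1)]
  exact main_aux K m hF σ hσ n k hk2 hkm
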